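/- Constants relations for lower characteristic (0,1): with α = Θ[0,0;0,1](0,0) and β = Θ[1,0;0,1](0,0), one has θ[0,0;0,1](0,0) · θ[0,0;0,0](0,0) = α² + β² and θ[1,0;0,1](0,0) · θ[1,0;0,0](0,0) = 2αβ. -/

import Mathlib

open Complex

/-- Genus-two theta function with real characteristics `a c b d`
(upper characteristics `a, c`, lower characteristics `b, d`),
moduli `τ₁ τ₂ τ₁₂` and complex arguments `x y`. -/
noncomputable def theta (τ₁ τ₂ τ₁₂ : ℂ) (a c b d : ℝ) (x y : ℂ) : ℂ :=
  ∑' p : ℤ × ℤ,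
    Complex.exp
      ((Real.pi : ℂ) * Complex.I *
          (τ₁ * ((p.1 : ℂ) + (a : ℂ) / 2) ^ 2 + τ₂ * ((p.2 : ℂ) + (c : ℂ) / 2) ^ 2 +
            2 * τ₁₂ * ((p.1 : ℂ) + (a : ℂ) / 2) * ((p.2 : ℂ) + (c : ℂ) / 2)) +
        2 * (Real.pi : ℂ) * Complex.I *
          (((p.1 : ℂ) + (a : ℂ) / 2) * (x + (b : ℂ) / 2) +
            ((p.2 : ℂ) + (c : ℂ) / 2) * (y + (d : ℂ) / 2)))

/-- The same theta function with doubled moduli `2τ₁, 2τ₂, 2τ₁₂`. -/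
noncomputable def Theta2 (τ₁ τ₂ τ₁₂ : ℂ) (a c b d : ℝ) (x y : ℂ) : ℂ :=
  theta (2 * τ₁) (2 * τ₂) (2 * τ₁₂) a c b d x y

noncomputable section ThetaAux

set_option maxHeartbeats 1600000

/-- Summand of the genus-two theta at `x = y = 0`. -/
def thetaTerm (T₁ T₂ T₁₂ : ℂ) (a c b d : ℝ) (p : ℤ × ℤ) : ℂ :=
  Complex.exp
    ((Real.pi : ℂ) * Complex.I *
        (T₁ * ((p.1 : ℂ) + (a : ℂ) / 2) ^ 2 + T₂ * ((p.2 : ℂ) + (c : ℂ) / 2) ^ 2 +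
          2 * T₁₂ * ((p.1 : ℂ) + (a : ℂ) / 2) * ((p.2 : ℂ) + (c : ℂ) / 2)) +
      2 * (Real.pi : ℂ) * Complex.I *
        (((p.1 : ℂ) + (a : ℂ) / 2) * ((b : ℂ) / 2) + ((p.2 : ℂ) + (c : ℂ) / 2) * ((d : ℂ) / 2)))

lemma theta_eq (T₁ T₂ T₁₂ : ℂ) (a c b d : ℝ) :
    theta T₁ T₂ T₁₂ a c b d 0 0 = ∑' p : ℤ × ℤ, thetaTerm T₁ T₂ T₁₂ a c b d p := by
  unfold theta thetaTerm
  apply tsum_congr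
  intro p
  congr 1
  ring

lemma exists_eps {I1 I2 I12 : ℝ} (h1 : 0 < I1) (h2 : 0 < I2) (h : I12 ^ 2 < I1 * I2) :
    ∃ ε : ℝ, 0 < ε ∧ ∀ u v : ℝ, ε * u ^ 2 + ε * v ^ 2 ≤ I1 * u ^ 2 + I2 * v ^ 2 + 2 * I12 * u * v := by
  have hD : 0 < I1 * I2 - I12 ^ 2 := by linarith
  have hS : 0 < I1 + I2 := by linarith
  set ε := min (min I1 I2) ((I1 * I2 - I12 ^ 2) / (I1 + I2)) / 2 with hεdef
  have hε : 0 < ε := half_pos (lt_min (lt_min h1 h2) (div_pos hD hS))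
  have hm1 : min (min I1 I2) ((I1 * I2 - I12 ^ 2) / (I1 + I2)) ≤ I1 :=
    (min_le_left _ _).trans (min_le_left _ _)
  have hm2 : min (min I1 I2) ((I1 * I2 - I12 ^ 2) / (I1 + I2)) ≤ I2 :=
    (min_le_left _ _).trans (min_le_right _ _)
  have hm3 : ε ≤ (I1 * I2 - I12 ^ 2) / (I1 + I2) / 2 :=
    div_le_div_of_nonneg_right (min_le_right _ _) two_pos.le
  have hε1 : ε < I1 := by rw [hεdef]; linarith
  have hε2 : ε < I2 := by rw [hεdef]; linarith
  have h₂ : ε * (I1 + I2) ≤ (I1 * I2 - I12 ^ 2) / 2 := by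
    rw [div_div] at hm3
    calc ε * (I1 + I2) ≤ (I1 * I2 - I12 ^ 2) / ((I1 + I2) * 2) * (I1 + I2) := by
          apply mul_le_mul_of_nonneg_right hm3 hS.le
      _ = (I1 * I2 - I12 ^ 2) / 2 := by field_simp
  have key : I12 ^ 2 ≤ (I1 - ε) * (I2 - ε) := by nlinarith [sq_nonneg ε]
  refine ⟨ε, hε, fun u v => ?_⟩
  have h3 : I12 ^ 2 * v ^ 2 ≤ ((I1 - ε) * (I2 - ε)) * v ^ 2 :=
    mul_le_mul_of_nonneg_right key (sq_nonneg v)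
  nlinarith [sq_nonneg ((I1 - ε) * u + I12 * v), sub_pos.mpr hε1, sq_nonneg v]

lemma summable_exp_shift {ε : ℝ} (hε : 0 < ε) (a : ℝ) :
    Summable fun n : ℤ => Real.exp (-(ε * ((n : ℝ) + a) ^ 2)) := by
  have h1 : Summable (jacobiTheta₂_term · ((ε * a / Real.pi : ℝ) * I) ((ε / Real.pi : ℝ) * I)) := by
    rw [summable_jacobiTheta₂_term_iff]
    simp [Real.pi_pos, div_pos hε Real.pi_pos]
  have h2 : Summable fun n : ℤ =>
      ‖jacobiTheta₂_term n ((ε * a / Real.pi : ℝ) * I) ((ε / Real.pi : ℝ) * I)‖ :=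
    summable_norm_iff.mpr h1
  have h3 := h2.mul_left (Real.exp (-(ε * a ^ 2)))
  apply h3.congr
  intro n
  rw [norm_jacobiTheta₂_term, ← Real.exp_add]
  congr 1
  have hπ : Real.pi ≠ 0 := Real.pi_ne_zero
  simp only [mul_I_im, ofReal_re]
  field_simp
  ring

lemma summable_norm_master {T₁ T₂ T₁₂ : ℂ} (h1 : 0 < T₁.im) (h2 : 0 < T₂.im)
    (h : T₁₂.im ^ 2 < T₁.im * T₂.im) (a c : ℝ) (φ : ℤ × ℤ → ℝ) :
    Summable fun p : ℤ × ℤ =>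
      ‖Complex.exp ((Real.pi : ℂ) * Complex.I *
          (T₁ * ((p.1 : ℂ) + (a : ℂ) / 2) ^ 2 + T₂ * ((p.2 : ℂ) + (c : ℂ) / 2) ^ 2 +
            2 * T₁₂ * ((p.1 : ℂ) + (a : ℂ) / 2) * ((p.2 : ℂ) + (c : ℂ) / 2)) +
        (φ p : ℂ) * Complex.I)‖ := by
  obtain ⟨ε, hε, hq⟩ := exists_eps h1 h2 h
  have hπε : 0 < Real.pi * ε := mul_pos Real.pi_pos hε
  have hb : Summable fun p : ℤ × ℤ =>
      Real.exp (-(Real.pi * ε * ((p.1 : ℝ) + a / 2) ^ 2)) *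
        Real.exp (-(Real.pi * ε * ((p.2 : ℝ) + c / 2) ^ 2)) :=
    (summable_exp_shift hπε (a / 2)).mul_of_nonneg (summable_exp_shift hπε (c / 2))
      (fun _ => (Real.exp_pos _).le) (fun _ => (Real.exp_pos _).le)
  apply hb.of_nonneg_of_le (fun _ => norm_nonneg _)
  intro p
  set u : ℝ := (p.1 : ℝ) + a / 2
  set v : ℝ := (p.2 : ℝ) + c / 2
  have harg : (Real.pi : ℂ) * Complex.I *
          (T₁ * ((p.1 : ℂ) + (a : ℂ) / 2) ^ 2 + T₂ * ((p.2 : ℂ) + (c : ℂ) / 2) ^ 2 +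
            2 * T₁₂ * ((p.1 : ℂ) + (a : ℂ) / 2) * ((p.2 : ℂ) + (c : ℂ) / 2)) +
        (φ p : ℂ) * Complex.I
      = (T₁ * (u : ℂ) ^ 2 + T₂ * (v : ℂ) ^ 2 + 2 * T₁₂ * (u : ℂ) * (v : ℂ)) * (Real.pi : ℂ) * I
        + (φ p : ℂ) * I := by
    simp only [u, v]
    push_cast
    ring
  rw [harg, Complex.norm_exp]
  have hre : ((T₁ * (u : ℂ) ^ 2 + T₂ * (v : ℂ) ^ 2 + 2 * T₁₂ * (u : ℂ) * (v : ℂ)) * (Real.pi : ℂ) * I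
        + (φ p : ℂ) * I).re
      = -Real.pi * (T₁.im * u ^ 2 + T₂.im * v ^ 2 + 2 * T₁₂.im * u * v) := by
    have : ((T₁ * (u : ℂ) ^ 2 + T₂ * (v : ℂ) ^ 2 + 2 * T₁₂ * (u : ℂ) * (v : ℂ))).im
        = T₁.im * u ^ 2 + T₂.im * v ^ 2 + 2 * T₁₂.im * u * v := by
      simp [Complex.add_im, Complex.mul_im, ← ofReal_pow]
      try ring
    rw [add_re, mul_I_re, mul_I_re, ofReal_im, mul_im]
    simp [this]
    try ring
  rw [hre, ← Real.exp_add]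
  rw [Real.exp_le_exp]
  have := hq u v
  nlinarith [Real.pi_pos]

lemma summable_norm_thetaTerm {T₁ T₂ T₁₂ : ℂ} (h1 : 0 < T₁.im) (h2 : 0 < T₂.im)
    (h : T₁₂.im ^ 2 < T₁.im * T₂.im) (a c b d : ℝ) :
    Summable fun p : ℤ × ℤ => ‖thetaTerm T₁ T₂ T₁₂ a c b d p‖ := by
  have := summable_norm_master h1 h2 h a c
    (fun p : ℤ × ℤ => 2 * Real.pi * (((p.1 : ℝ) + a / 2) * (b / 2) + ((p.2 : ℝ) + c / 2) * (d / 2)))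
  apply this.congr
  intro p
  congr 1
  unfold thetaTerm
  congr 1
  push_cast
  ring

/-- The reindexing map realizing `ℤ⁴` as four copies of `ℤ⁴` via
`m = u + v + ε, n = s + t + δ, m' = u - v, n' = s - t`. -/
def Emap : ((Bool × Bool) × ((ℤ × ℤ) × (ℤ × ℤ))) → ((ℤ × ℤ) × (ℤ × ℤ)) :=
  fun x =>
    ((x.2.1.1 + x.2.2.1 + (cond x.1.1 1 0), x.2.1.2 + x.2.2.2 + (cond x.1.2 1 0)),
      (x.2.1.1 - x.2.2.1, x.2.1.2 - x.2.2.2))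

lemma Emap_bij : Function.Bijective Emap := by
  constructor
  · rintro ⟨⟨e1, d1⟩, ⟨⟨u, s⟩, ⟨v, t⟩⟩⟩ ⟨⟨e2, d2⟩, ⟨⟨u', s'⟩, ⟨v', t'⟩⟩⟩ h
    simp only [Emap, Prod.mk.injEq] at h
    obtain ⟨⟨ha, hb⟩, hc, hd⟩ := h
    rcases e1 <;> rcases e2 <;> rcases d1 <;> rcases d2 <;>
      simp_all [Prod.ext_iff] <;> omega
  · rintro ⟨⟨m, n⟩, ⟨m', n'⟩⟩
    rcases Int.even_or_odd (m - m') with ⟨v, hv⟩ | ⟨v, hv⟩ <;>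
      rcases Int.even_or_odd (n - n') with ⟨t, ht⟩ | ⟨t, ht⟩
    · exact ⟨⟨⟨false, false⟩, ⟨⟨m' + v, n' + t⟩, ⟨v, t⟩⟩⟩, by simp [Emap, Prod.ext_iff]; omega⟩
    · exact ⟨⟨⟨false, true⟩, ⟨⟨m' + v, n' + t⟩, ⟨v, t⟩⟩⟩, by simp [Emap, Prod.ext_iff]; omega⟩
    · exact ⟨⟨⟨true, false⟩, ⟨⟨m' + v, n' + t⟩, ⟨v, t⟩⟩⟩, by simp [Emap, Prod.ext_iff]; omega⟩
    · exact ⟨⟨⟨true, true⟩, ⟨⟨m' + v, n' + t⟩, ⟨v, t⟩⟩⟩, by simp [Emap, Prod.ext_iff]; omega⟩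

def Eequiv : ((Bool × Bool) × ((ℤ × ℤ) × (ℤ × ℤ))) ≃ ((ℤ × ℤ) × (ℤ × ℤ)) :=
  Equiv.ofBijective Emap Emap_bij

def negShift (A : ℤ) : (ℤ × ℤ) ≃ (ℤ × ℤ) where
  toFun p := (-p.1 - A, -p.2 - 1)
  invFun p := (-p.1 - A, -p.2 - 1)
  left_inv p := by simp [Prod.ext_iff]
  right_inv p := by simp [Prod.ext_iff]

lemma exp_eq_exp_of_int (A B : ℂ) (k : ℤ) (h : A = B + k * (2 * Real.pi * I)) :
    Complex.exp A = Complex.exp B := by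
  rw [h, Complex.exp_add, Complex.exp_int_mul_two_pi_mul_I, mul_one]

lemma combined_eq (T₁ T₂ T₁₂ : ℂ) (A e f : ℤ) (u s v t : ℤ) :
    thetaTerm T₁ T₂ T₁₂ (A : ℝ) 0 0 1 (u + v + e, s + t + f) *
        thetaTerm T₁ T₂ T₁₂ (A : ℝ) 0 0 0 (u - v, s - t) =
      thetaTerm (2 * T₁) (2 * T₂) (2 * T₁₂) ((A + e : ℤ) : ℝ) ((f : ℤ) : ℝ) 0 1 (u, s) *
        thetaTerm (2 * T₁) (2 * T₂) (2 * T₁₂) ((e : ℤ) : ℝ) ((f : ℤ) : ℝ) 0 1 (v, t) := by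
  unfold thetaTerm
  rw [← Complex.exp_add, ← Complex.exp_add]
  congr 1
  push_cast
  ring

lemma vanish (T₁ T₂ T₁₂ : ℂ) (A : ℤ) :
    ∑' p : ℤ × ℤ, thetaTerm T₁ T₂ T₁₂ (A : ℝ) 1 0 1 p = 0 := by
  have hinv : ∀ p : ℤ × ℤ,
      thetaTerm T₁ T₂ T₁₂ (A : ℝ) 1 0 1 (negShift A p) = -thetaTerm T₁ T₂ T₁₂ (A : ℝ) 1 0 1 p := by
    intro p
    have h1 : thetaTerm T₁ T₂ T₁₂ (A : ℝ) 1 0 1 (negShift A p) =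
        Complex.exp ((Real.pi : ℂ) * Complex.I *
            (T₁ * ((p.1 : ℂ) + (A : ℂ) / 2) ^ 2 + T₂ * ((p.2 : ℂ) + (1 : ℂ) / 2) ^ 2 +
              2 * T₁₂ * ((p.1 : ℂ) + (A : ℂ) / 2) * ((p.2 : ℂ) + (1 : ℂ) / 2)) +
          2 * (Real.pi : ℂ) * Complex.I *
            (((p.1 : ℂ) + (A : ℂ) / 2) * ((0 : ℂ) / 2) + ((p.2 : ℂ) + (1 : ℂ) / 2) * ((1 : ℂ) / 2))
          + Real.pi * I) := by
      simp only [thetaTerm, negShift, Equiv.coe_fn_mk]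
      apply exp_eq_exp_of_int _ _ (-(p.2 + 1))
      push_cast
      ring
    rw [h1, Complex.exp_add, Complex.exp_pi_mul_I, mul_neg_one]
    unfold thetaTerm
    push_cast
    ring_nf
  have h2 : ∑' p, thetaTerm T₁ T₂ T₁₂ (A : ℝ) 1 0 1 (negShift A p) =
      ∑' p, thetaTerm T₁ T₂ T₁₂ (A : ℝ) 1 0 1 p := (negShift A).tsum_eq _
  rw [tsum_congr hinv, tsum_neg] at h2
  exact CharZero.neg_eq_self_iff.mp h2

lemma tsum_shift (T₁ T₂ T₁₂ : ℂ) (A : ℤ) (c d : ℝ) :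
    ∑' p : ℤ × ℤ, thetaTerm T₁ T₂ T₁₂ ((A : ℝ) + 2) c 0 d p =
      ∑' p : ℤ × ℤ, thetaTerm T₁ T₂ T₁₂ (A : ℝ) c 0 d p := by
  have h := (Equiv.prodCongr (Equiv.addRight (1 : ℤ)) (Equiv.refl ℤ)).tsum_eq
    (thetaTerm T₁ T₂ T₁₂ (A : ℝ) c 0 d)
  rw [← h]
  apply tsum_congr
  rintro ⟨u, s⟩
  unfold thetaTerm
  congr 1
  push_cast
  simp only [Equiv.prodCongr_apply, Equiv.coe_addRight, Equiv.refl_apply, Prod.map]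
  push_cast
  ring

lemma key_product (T₁ T₂ T₁₂ : ℂ) (h1 : 0 < T₁.im) (h2 : 0 < T₂.im)
    (h : T₁₂.im ^ 2 < T₁.im * T₂.im) (A : ℤ) :
    (∑' p : ℤ × ℤ, thetaTerm T₁ T₂ T₁₂ (A : ℝ) 0 0 1 p) *
        (∑' p : ℤ × ℤ, thetaTerm T₁ T₂ T₁₂ (A : ℝ) 0 0 0 p) =
      (∑' p : ℤ × ℤ, thetaTerm (2 * T₁) (2 * T₂) (2 * T₁₂) ((A : ℝ) + 1) 0 0 1 p) *
          (∑' p : ℤ × ℤ, thetaTerm (2 * T₁) (2 * T₂) (2 * T₁₂) 1 0 0 1 p) +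
        (∑' p : ℤ × ℤ, thetaTerm (2 * T₁) (2 * T₂) (2 * T₁₂) (A : ℝ) 0 0 1 p) *
          (∑' p : ℤ × ℤ, thetaTerm (2 * T₁) (2 * T₂) (2 * T₁₂) 0 0 0 1 p) := by
  have hd1 : 0 < (2 * T₁).im := by
    have : (2 * T₁).im = 2 * T₁.im := by simp
    rw [this]; linarith
  have hd2 : 0 < (2 * T₂).im := by
    have : (2 * T₂).im = 2 * T₂.im := by simp
    rw [this]; linarith
  have hd : (2 * T₁₂).im ^ 2 < (2 * T₁).im * (2 * T₂).im := by
    have e1 : (2 * T₁).im = 2 * T₁.im := by simp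
    have e2 : (2 * T₂).im = 2 * T₂.im := by simp
    have e3 : (2 * T₁₂).im = 2 * T₁₂.im := by simp
    rw [e1, e2, e3]; nlinarith
  have hn1 := summable_norm_thetaTerm h1 h2 h (A : ℝ) 0 0 1
  have hn2 := summable_norm_thetaTerm h1 h2 h (A : ℝ) 0 0 0
  set H : ((ℤ × ℤ) × (ℤ × ℤ)) → ℂ := fun z =>
    thetaTerm T₁ T₂ T₁₂ (A : ℝ) 0 0 1 z.1 * thetaTerm T₁ T₂ T₁₂ (A : ℝ) 0 0 0 z.2 with hHdef
  have hH : Summable H := summable_mul_of_summable_norm hn1 hn2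
  have hH' : Summable fun x => H (Eequiv x) := (Eequiv.summable_iff).mpr hH
  rw [tsum_mul_tsum_of_summable_norm hn1 hn2, ← Eequiv.tsum_eq H, Summable.tsum_prod hH',
    tsum_fintype, Fintype.sum_prod_type]
  simp only [Fintype.sum_bool]
  have case_gen : ∀ (eB fB : Bool), (∑' k : (ℤ × ℤ) × (ℤ × ℤ), H (Eequiv ((eB, fB), k))) =
      (∑' p : ℤ × ℤ, thetaTerm (2 * T₁) (2 * T₂) (2 * T₁₂)
          ((A : ℝ) + (cond eB 1 0 : ℤ)) ((cond fB 1 0 : ℤ) : ℝ) 0 1 p) *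
        (∑' p : ℤ × ℤ, thetaTerm (2 * T₁) (2 * T₂) (2 * T₁₂)
          ((cond eB 1 0 : ℤ) : ℝ) ((cond fB 1 0 : ℤ) : ℝ) 0 1 p) := by
    intro eB fB
    have hpt : ∀ k : (ℤ × ℤ) × (ℤ × ℤ), H (Eequiv ((eB, fB), k)) =
        thetaTerm (2 * T₁) (2 * T₂) (2 * T₁₂)
            ((A + cond eB 1 0 : ℤ) : ℝ) ((cond fB 1 0 : ℤ) : ℝ) 0 1 k.1 *
          thetaTerm (2 * T₁) (2 * T₂) (2 * T₁₂)
            ((cond eB 1 0 : ℤ) : ℝ) ((cond fB 1 0 : ℤ) : ℝ) 0 1 k.2 := by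
      rintro ⟨⟨u, s⟩, ⟨v, t⟩⟩
      have hE : Eequiv ((eB, fB), ((u, s), (v, t))) =
          ((u + v + cond eB 1 0, s + t + cond fB 1 0), (u - v, s - t)) := rfl
      rw [hE, hHdef]
      exact combined_eq T₁ T₂ T₁₂ A (cond eB 1 0) (cond fB 1 0) u s v t
    rw [tsum_congr hpt]
    rw [← tsum_mul_tsum_of_summable_norm
      (summable_norm_thetaTerm hd1 hd2 hd _ _ 0 1) (summable_norm_thetaTerm hd1 hd2 hd _ _ 0 1)]
    congr 2
    push_cast
    ring
  rw [case_gen, case_gen, case_gen, case_gen]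
  have v1 : (∑' p : ℤ × ℤ, thetaTerm (2 * T₁) (2 * T₂) (2 * T₁₂)
      (((cond true 1 0 : ℤ) : ℝ)) ((cond true 1 0 : ℤ) : ℝ) 0 1 p) = 0 := by
    have := vanish (2 * T₁) (2 * T₂) (2 * T₁₂) 1
    simpa using this
  have v0 : (∑' p : ℤ × ℤ, thetaTerm (2 * T₁) (2 * T₂) (2 * T₁₂)
      (((cond false 1 0 : ℤ) : ℝ)) ((cond true 1 0 : ℤ) : ℝ) 0 1 p) = 0 := by
    have := vanish (2 * T₁) (2 * T₂) (2 * T₁₂) 0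
    simpa using this
  rw [v1, v0, mul_zero, mul_zero]
  simp only [cond]
  push_cast
  ring_nf
  end ThetaAux

theorem constants_relations_01 (τ₁ τ₂ τ₁₂ : ℂ)
    (hτ₁ : 0 < τ₁.im) (hτ₂ : 0 < τ₂.im) (hτ : τ₁₂.im ^ 2 < τ₁.im * τ₂.im) :
    theta τ₁ τ₂ τ₁₂ 0 0 0 1 0 0 * theta τ₁ τ₂ τ₁₂ 0 0 0 0 0 0 =
        Theta2 τ₁ τ₂ τ₁₂ 0 0 0 1 0 0 ^ 2 + Theta2 τ₁ τ₂ τ₁₂ 1 0 0 1 0 0 ^ 2 ∧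
      theta τ₁ τ₂ τ₁₂ 1 0 0 1 0 0 * theta τ₁ τ₂ τ₁₂ 1 0 0 0 0 0 =
        2 * Theta2 τ₁ τ₂ τ₁₂ 0 0 0 1 0 0 * Theta2 τ₁ τ₂ τ₁₂ 1 0 0 1 0 0 := by
  constructor
  · have kp := key_product τ₁ τ₂ τ₁₂ hτ₁ hτ₂ hτ 0
    norm_num at kp
    rw [Theta2, Theta2, theta_eq, theta_eq, theta_eq, theta_eq]
    rw [kp]
    ring
  · have kp := key_product τ₁ τ₂ τ₁₂ hτ₁ hτ₂ hτ 1
    norm_num at kp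
    have hs := tsum_shift (2 * τ₁) (2 * τ₂) (2 * τ₁₂) 0 0 1
    norm_num at hs
    rw [hs] at kp
    rw [Theta2, Theta2, theta_eq, theta_eq, theta_eq, theta_eq]
    rw [kp]
    ring
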